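/- Let O be the origin in ℝ², let F be a point with ‖F‖ > 1, and let Q be a point with ‖Q‖ < 1. Then ‖ (F - Q)/‖F - Q‖ - F/‖F‖ ‖ ≤ 4/(1 + ‖F‖). -/

import Mathlib

theorem unit_vector_difference_bound (F Q : EuclideanSpace ℝ (Fin 2))
    (hF : 1 < ‖F‖) (hQ : ‖Q‖ < 1) :
    ‖(‖F - Q‖⁻¹ : ℝ) • (F - Q) - (‖F‖⁻¹ : ℝ) • F‖ ≤ 4 / (1 + ‖F‖) := by
  have hQx : ‖F‖ - ‖Q‖ ≤ ‖F - Q‖ := norm_sub_norm_le F Q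
  have hxpos : (0:ℝ) < ‖F - Q‖ := by linarith [norm_nonneg Q]
  have hFpos : (0:ℝ) < ‖F‖ := by linarith
  have key : (‖F - Q‖⁻¹ : ℝ) • (F - Q) - (‖F‖⁻¹ : ℝ) • F
      = (‖F‖⁻¹ : ℝ) • (-Q) + ((‖F - Q‖⁻¹ : ℝ) - ‖F‖⁻¹) • (F - Q) := by
    module
  have h1 : ‖(‖F‖⁻¹ : ℝ) • (-Q)‖ = ‖Q‖ / ‖F‖ := by
    rw [norm_smul, norm_neg, Real.norm_eq_abs, abs_inv, abs_of_pos hFpos]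
    ring
  have habs : |‖F‖ - ‖F - Q‖| ≤ ‖Q‖ := by
    have := abs_norm_sub_norm_le F (F - Q)
    rwa [show F - (F - Q) = Q by abel] at this
  have h2 : ‖((‖F - Q‖⁻¹ : ℝ) - ‖F‖⁻¹) • (F - Q)‖ ≤ ‖Q‖ / ‖F‖ := by
    rw [norm_smul, Real.norm_eq_abs]
    have hprod : ((‖F - Q‖⁻¹ : ℝ) - ‖F‖⁻¹) * ‖F - Q‖ = (‖F‖ - ‖F - Q‖) / ‖F‖ := by
      field_simp
    have heq : |(‖F - Q‖⁻¹ : ℝ) - ‖F‖⁻¹| * ‖F - Q‖ = |‖F‖ - ‖F - Q‖| / ‖F‖ := by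
      calc |(‖F - Q‖⁻¹ : ℝ) - ‖F‖⁻¹| * ‖F - Q‖
          = |((‖F - Q‖⁻¹ : ℝ) - ‖F‖⁻¹) * ‖F - Q‖| := by
            rw [abs_mul, abs_of_pos hxpos]
        _ = |(‖F‖ - ‖F - Q‖) / ‖F‖| := by rw [hprod]
        _ = |‖F‖ - ‖F - Q‖| / ‖F‖ := by rw [abs_div, abs_of_pos hFpos]
    rw [heq]
    gcongr
  calc ‖(‖F - Q‖⁻¹ : ℝ) • (F - Q) - (‖F‖⁻¹ : ℝ) • F‖
      ≤ ‖(‖F‖⁻¹ : ℝ) • (-Q)‖ + ‖((‖F - Q‖⁻¹ : ℝ) - ‖F‖⁻¹) • (F - Q)‖ := by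
        rw [key]; exact norm_add_le _ _
    _ ≤ ‖Q‖ / ‖F‖ + ‖Q‖ / ‖F‖ := by rw [h1]; linarith
    _ ≤ 4 / (1 + ‖F‖) := by
        rw [← add_div, div_le_div_iff₀ hFpos (by linarith)]
        nlinarith [norm_nonneg Q]
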